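/- Let α ≥ 0 be an integer, k = 4α + 9, n = 2k, and s = 2α + 4. Let S1 = {1,…,s, n−s,…,n−1} and S2 = {k−s,…,k−1, k+1,…,k+s}. Then the circulant graphs G(ℤ_n, S1) and G(ℤ_n, S2) have the same inertia: their adjacency matrices have the same numbers of positive, negative, and zero eigenvalues (counted with multiplicity). -/

import Mathlib

open Polynomial

noncomputable def circAdj (n : ℕ) (S : Finset (ZMod n)) : Matrix (ZMod n) (ZMod n) ℝ :=
  fun i j => if j - i ∈ S then 1 else 0

noncomputable def circSpectrum (n : ℕ) [NeZero n] (S : Finset (ZMod n)) : Multiset ℝ :=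
  (Matrix.charpoly (circAdj n S)).roots

noncomputable def zc (n : ℕ) : ℂ := Complex.exp (2 * Real.pi * Complex.I / n)

noncomputable def ec (n : ℕ) (x : ZMod n) : ℂ := zc n ^ x.val

lemma zc_pow_n (n : ℕ) [NeZero n] : zc n ^ n = 1 :=
  (Complex.isPrimitiveRoot_exp n (NeZero.ne n)).pow_eq_one

lemma zc_pow_mod (n : ℕ) [NeZero n] (m : ℕ) : zc n ^ (m % n) = zc n ^ m := by
  conv_rhs => rw [← Nat.div_add_mod m n]
  rw [pow_add, pow_mul, zc_pow_n, one_pow, one_mul]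

lemma ec_add (n : ℕ) [NeZero n] (x y : ZMod n) : ec n (x + y) = ec n x * ec n y := by
  rw [ec, ec, ec, ZMod.val_add, zc_pow_mod, pow_add]

lemma ec_mul (n : ℕ) [NeZero n] (x y : ZMod n) : ec n (x * y) = ec n x ^ y.val := by
  rw [ec, ec, ZMod.val_mul, zc_pow_mod, pow_mul]

lemma ec_zero (n : ℕ) [NeZero n] : ec n 0 = 1 := by simp [ec]

lemma sum_ec (n : ℕ) [NeZero n] (c : ZMod n) :
    ∑ x : ZMod n, ec n (c * x) = if c = 0 then (n : ℂ) else 0 := by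
  have hsum : ∑ x : ZMod n, ec n (c * x) = ∑ i ∈ Finset.range n, ec n c ^ i := by
    simp only [ec_mul]
    refine Finset.sum_nbij' (fun x => x.val) (fun i => (i : ZMod n)) ?_ ?_ ?_ ?_ ?_
    · intro a _; exact Finset.mem_range.mpr (ZMod.val_lt a)
    · intro a _; exact Finset.mem_univ _
    · intro a _; exact ZMod.natCast_zmod_val a
    · intro i hi; exact ZMod.val_cast_of_lt (Finset.mem_range.mp hi)
    · intro a _; rfl
  rw [hsum]
  by_cases hc : c = 0
  · simp [hc, ec_zero]
  · rw [if_neg hc]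
    have hne1 : ec n c ≠ 1 := by
      have hv : 0 < c.val := Nat.pos_of_ne_zero (fun h => hc ((ZMod.val_eq_zero c).mp h))
      exact (Complex.isPrimitiveRoot_exp n (NeZero.ne n)).pow_ne_one_of_pos_of_lt hv.ne' (ZMod.val_lt c)
    rw [geom_sum_eq hne1]
    have : ec n c ^ n = 1 := by
      rw [ec, ← pow_mul, mul_comm, pow_mul, zc_pow_n, one_pow]
    rw [this, sub_self, zero_div]
open Polynomial
section
variable {R : Type*} [CommRing R] {m : Type*} [Fintype m] [DecidableEq m]

lemma my_charpoly_conj (P A Q : Matrix m m R) (h : P * Q = 1) :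
    (P * A * Q).charpoly = A.charpoly := by
  have hPQc : P.map C * Q.map C = 1 := by
    rw [← Matrix.map_mul, h, Matrix.map_one _ (map_zero C) (map_one C)]
  have hchar : Matrix.charmatrix (P * A * Q) = P.map C * Matrix.charmatrix A * Q.map C := by
    rw [Matrix.charmatrix, Matrix.charmatrix]
    rw [Matrix.mul_sub, Matrix.sub_mul]
    congr 1
    · -- scalar X = P.map C * scalar X * Q.map C
      have hc : P.map C * Matrix.scalar m (X : R[X]) = Matrix.scalar m (X : R[X]) * P.map C :=
        (Matrix.scalar_commute (X : R[X]) (fun r' => Commute.all _ _) (P.map C)).symm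
      rw [hc, Matrix.mul_assoc, hPQc, Matrix.mul_one]
    · simp only [RingHom.mapMatrix_apply]
      rw [← Matrix.map_mul, ← Matrix.map_mul]
  rw [Matrix.charpoly, Matrix.charpoly, hchar, Matrix.det_mul, Matrix.det_mul]
  have hdet : (P.map C).det * (Q.map C).det = 1 := by
    rw [← Matrix.det_mul, hPQc, Matrix.det_one]
  calc (P.map C).det * (Matrix.charmatrix A).det * (Q.map C).det
      = (Matrix.charmatrix A).det * ((P.map C).det * (Q.map C).det) := by ring
    _ = (Matrix.charmatrix A).det := by rw [hdet, mul_one]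

lemma my_charpoly_diagonal (d : m → R) :
    (Matrix.diagonal d).charpoly = ∏ i : m, (X - C (d i)) := by
  rw [Matrix.charpoly, Matrix.charmatrix]
  have : Matrix.scalar m (X : R[X]) - (C : R →+* R[X]).mapMatrix (Matrix.diagonal d)
      = Matrix.diagonal (fun i => X - C (d i)) := by
    ext i j
    by_cases hij : i = j <;> simp [Matrix.scalar_apply, Matrix.diagonal_apply, hij]
  rw [this, Matrix.det_diagonal]

end
open Polynomial

noncomputable def Fm (n : ℕ) : Matrix (ZMod n) (ZMod n) ℂ := fun i j => ec n (i * j)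
noncomputable def Gm (n : ℕ) : Matrix (ZMod n) (ZMod n) ℂ := fun i j => ec n (-(i * j))
noncomputable def lamS (n : ℕ) (S : Finset (ZMod n)) (j : ZMod n) : ℂ := ∑ a ∈ S, ec n (a * j)

lemma adj_mul_F (n : ℕ) [NeZero n] (S : Finset (ZMod n)) :
    (circAdj n S).map Complex.ofReal * Fm n = Fm n * Matrix.diagonal (lamS n S) := by
  ext i j
  rw [Matrix.mul_apply, Matrix.mul_diagonal]
  have h1 : ∀ x : ZMod n, ((circAdj n S).map Complex.ofReal) i x * Fm n x j
      = if x - i ∈ S then ec n (x * j) else 0 := by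
    intro x
    simp only [circAdj, Matrix.map_apply, Fm]
    split_ifs <;> simp
  simp only [h1]
  rw [← Equiv.sum_comp (Equiv.addLeft i) (fun x => if x - i ∈ S then ec n (x * j) else 0)]
  simp only [Equiv.coe_addLeft, add_sub_cancel_left]
  rw [Finset.sum_ite_mem, Finset.univ_inter]
  rw [Fm, lamS, Finset.mul_sum]
  apply Finset.sum_congr rfl
  intro a _
  rw [add_mul, ec_add, mul_comm (ec n (i*j))]

lemma F_mul_G (n : ℕ) [NeZero n] : Fm n * Gm n = (n : ℂ) • 1 := by
  ext i j
  rw [Matrix.mul_apply]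
  have h1 : ∀ x : ZMod n, Fm n i x * Gm n x j = ec n ((i - j) * x) := by
    intro x
    rw [Fm, Gm, ← ec_add]
    ring_nf
  simp only [h1]
  have := sum_ec n (i - j)
  rw [this]
  by_cases hij : i = j <;>
    simp [hij, sub_eq_zero, Matrix.one_apply, Ne.symm]
open Polynomial

lemma charpoly_c (n : ℕ) [NeZero n] (S : Finset (ZMod n)) :
    ((circAdj n S).map Complex.ofReal).charpoly = ∏ j : ZMod n, (X - C (lamS n S j)) := by
  have hinv : Fm n * (((n:ℂ)⁻¹) • Gm n) = 1 := by
    rw [Matrix.mul_smul, F_mul_G, smul_smul, inv_mul_cancel₀ (Nat.cast_ne_zero.mpr (NeZero.ne n)),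
      one_smul]
  have hA : (circAdj n S).map Complex.ofReal
      = Fm n * Matrix.diagonal (lamS n S) * (((n:ℂ)⁻¹) • Gm n) := by
    rw [← adj_mul_F n S, Matrix.mul_assoc, hinv, Matrix.mul_one]
  rw [hA, my_charpoly_conj _ _ _ hinv, my_charpoly_diagonal]

lemma spectrum_eq (n : ℕ) [NeZero n] (S : Finset (ZMod n)) (r : ZMod n → ℝ)
    (h : ∀ j, lamS n S j = (r j : ℂ)) :
    circSpectrum n S = Finset.univ.val.map r := by
  have hmap : (circAdj n S).charpoly.map Complex.ofRealHom
      = (∏ j : ZMod n, (X - C (r j))).map Complex.ofRealHom := by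
    rw [← Matrix.charpoly_map]
    have : (circAdj n S).map Complex.ofRealHom = (circAdj n S).map Complex.ofReal := rfl
    rw [this, charpoly_c, Polynomial.map_prod]
    apply Finset.prod_congr rfl
    intro j _
    rw [h j, Polynomial.map_sub, Polynomial.map_X, Polynomial.map_C]
    rfl
  have heq := Polynomial.map_injective Complex.ofRealHom Complex.ofReal_injective hmap
  rw [circSpectrum, heq]
  have hprod : ∏ j : ZMod n, (X - C (r j))
      = ((Finset.univ.val.map r).map (fun a => X - C a)).prod := by
    rw [Multiset.map_map]
    rfl
  rw [hprod, Polynomial.roots_multiset_prod_X_sub_C]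
open Polynomial

lemma dirichlet (m : ℕ) (x : ℝ) :
    Real.sin x * ∑ a ∈ Finset.Icc 1 m, (2 * Real.cos (2 * a * x))
      = Real.sin ((2 * m + 1) * x) - Real.sin x := by
  induction m with
  | zero => simp
  | succ p ih =>
    rw [Finset.sum_Icc_succ_top (by omega), mul_add, ih]
    have e1 : ((2 * (p + 1 : ℕ) + 1 : ℝ)) * x = 2 * ((p : ℝ) + 1) * x + x := by push_cast; ring
    have e2 : ((2 * (p : ℕ) + 1 : ℝ)) * x = 2 * ((p : ℝ) + 1) * x - x := by push_cast; ring
    have e3 : (2 * ((p + 1 : ℕ) : ℝ)) * x = 2 * ((p : ℝ) + 1) * x := by push_cast; ring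
    push_cast
    have h1 := Real.sin_add (2 * ((p : ℝ) + 1) * x) x
    have h2 := Real.sin_sub (2 * ((p : ℝ) + 1) * x) x
    have g1 : (2 * ((p : ℝ) + 1) + 1) * x = 2 * ((p : ℝ) + 1) * x + x := by ring
    have g2 : (2 * (p : ℝ) + 1) * x = 2 * ((p : ℝ) + 1) * x - x := by ring
    rw [g1, g2, h1, h2]
    ring

lemma sin_odd_half (m : ℕ) : Real.sin ((2 * (m : ℝ) + 1) * Real.pi / 2) = (-1 : ℝ) ^ m := by
  induction m with
  | zero => norm_num
  | succ p ih =>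
    have : (2 * ((p : ℝ) + 1) + 1) * Real.pi / 2 = (2 * (p : ℝ) + 1) * Real.pi / 2 + Real.pi := by
      ring
    push_cast
    rw [this, Real.sin_add_pi, ih]
    ring

lemma sin_lt_one_of_ne (x : ℝ) (h0 : 0 < x) (hpi : x < Real.pi) (hne : x ≠ Real.pi / 2) :
    Real.sin x < 1 := by
  rcases lt_or_eq_of_le (Real.sin_le_one x) with h | h
  · exact h
  · exfalso
    have hcos : Real.cos x = 0 := by
      have := Real.sin_sq_add_cos_sq x
      have hc2 : Real.cos x ^ 2 = 0 := by nlinarith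
      exact pow_eq_zero_iff (n := 2) (by norm_num) |>.mp hc2
    rcases Real.cos_eq_zero_iff.mp hcos with ⟨ℓ, hℓ⟩
    have hpipos := Real.pi_pos
    have : (0 : ℝ) < (2 * (ℓ : ℝ) + 1) / 2 := by
      have : 0 < (2 * (ℓ : ℝ) + 1) * Real.pi / 2 := hℓ ▸ h0
      nlinarith
    have : ((2 * (ℓ : ℝ) + 1) / 2) < 1 := by
      have : (2 * (ℓ : ℝ) + 1) * Real.pi / 2 < Real.pi := hℓ ▸ hpi
      nlinarith
    have hr1 : (0 : ℝ) < 2 * (ℓ : ℝ) + 1 := by linarith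
    have hr2 : 2 * (ℓ : ℝ) + 1 < 2 := by linarith
    have hi1 : (0 : ℤ) < 2 * ℓ + 1 := by exact_mod_cast hr1
    have hi2 : (2 * ℓ + 1 : ℤ) < 2 := by exact_mod_cast hr2
    have hl0 : ℓ = 0 := by omega
    subst hl0
    apply hne
    rw [hℓ]
    push_cast
    ring
open Polynomial

lemma zc_exp_eq (n : ℕ) [NeZero n] (m : ℕ) :
    zc n ^ m = Complex.exp (((2 * Real.pi * m / n : ℝ)) * Complex.I) := by
  rw [zc, ← Complex.exp_nat_mul]
  congr 1
  push_cast
  ring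

lemma ec_pow_exp (n : ℕ) [NeZero n] (j : ZMod n) (a : ℕ) :
    ec n j ^ a = Complex.exp (((2 * Real.pi * (j.val * a) / n : ℝ)) * Complex.I) := by
  rw [ec, ← pow_mul, zc_exp_eq]
  congr 2
  push_cast
  ring

lemma ec_re_cos (n : ℕ) [NeZero n] (j : ZMod n) (a : ℕ) :
    (ec n j ^ a).re = Real.cos (2 * a * (Real.pi * j.val / n)) := by
  rw [ec_pow_exp, Complex.exp_ofReal_mul_I_re]
  congr 1
  push_cast
  ring

lemma ec_pow_inv_conj (n : ℕ) [NeZero n] (j : ZMod n) (a : ℕ) :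
    (ec n j ^ a)⁻¹ = (starRingEnd ℂ) (ec n j ^ a) := by
  apply Complex.inv_eq_conj
  rw [ec_pow_exp]
  rw [Complex.norm_exp_ofReal_mul_I]

lemma ec_neg (n : ℕ) [NeZero n] (x : ZMod n) : ec n (-x) = (ec n x)⁻¹ := by
  have h : ec n x * ec n (-x) = 1 := by
    rw [← ec_add, add_neg_cancel, ec_zero]
  exact eq_inv_of_mul_eq_one_right h

lemma ec_pair (n : ℕ) [NeZero n] (j : ZMod n) (a : ℕ) (ha : a < n) :
    ec n (a * j) + ec n (-((a : ZMod n) * j)) = ((2 * (ec n j ^ a).re : ℝ) : ℂ) := by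
  have h1 : ec n ((a : ZMod n) * j) = ec n j ^ a := by
    rw [mul_comm, ec_mul, ZMod.val_cast_of_lt ha]
  rw [ec_neg, h1, ec_pow_inv_conj, Complex.add_conj]

lemma lam_S1 (n s : ℕ) [NeZero n] (h2s : 2 * s < n) (S1 : Finset (ZMod n))
    (hS1 : S1 = ((Finset.Icc 1 s).image fun h : ℕ => (h : ZMod n)) ∪
                ((Finset.Icc (n - s) (n - 1)).image fun h : ℕ => (h : ZMod n)))
    (j : ZMod n) :
    lamS n S1 j = ((∑ a ∈ Finset.Icc 1 s, 2 * ((ec n j ^ a).re) : ℝ) : ℂ) := by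
  have hinj1 : ∀ a ∈ Finset.Icc 1 s, ∀ b ∈ Finset.Icc 1 s,
      (a : ZMod n) = (b : ZMod n) → a = b := by
    intro a ha b hb hab
    simp only [Finset.mem_Icc] at ha hb
    have : ((a : ZMod n)).val = ((b : ZMod n)).val := by rw [hab]
    rwa [ZMod.val_cast_of_lt (by omega), ZMod.val_cast_of_lt (by omega)] at this
  have hinj2 : ∀ a ∈ Finset.Icc (n-s) (n-1), ∀ b ∈ Finset.Icc (n-s) (n-1),
      (a : ZMod n) = (b : ZMod n) → a = b := by
    intro a ha b hb hab
    simp only [Finset.mem_Icc] at ha hb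
    have : ((a : ZMod n)).val = ((b : ZMod n)).val := by rw [hab]
    rwa [ZMod.val_cast_of_lt (by omega), ZMod.val_cast_of_lt (by omega)] at this
  have hdisj : Disjoint ((Finset.Icc 1 s).image fun h : ℕ => (h : ZMod n))
      ((Finset.Icc (n - s) (n - 1)).image fun h : ℕ => (h : ZMod n)) := by
    rw [Finset.disjoint_left]
    intro x hx1 hx2
    rcases Finset.mem_image.mp hx1 with ⟨a, ha, rfl⟩
    rcases Finset.mem_image.mp hx2 with ⟨b, hb, hba⟩
    simp only [Finset.mem_Icc] at ha hb
    have : ((b : ZMod n)).val = ((a : ZMod n)).val := by rw [hba]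
    rw [ZMod.val_cast_of_lt (by omega), ZMod.val_cast_of_lt (by omega)] at this
    omega
  rw [lamS, hS1, Finset.sum_union hdisj, Finset.sum_image hinj1, Finset.sum_image hinj2]
  have hre : ∑ b ∈ Finset.Icc (n-s) (n-1), ec n ((b : ZMod n) * j)
      = ∑ a ∈ Finset.Icc 1 s, ec n (-((a : ZMod n) * j)) := by
    refine Finset.sum_nbij' (fun b => n - b) (fun a => n - a) ?_ ?_ ?_ ?_ ?_
    · intro b hb; simp only [Finset.mem_Icc] at *; omega
    · intro a ha; simp only [Finset.mem_Icc] at *; omega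
    · intro b hb; simp only [Finset.mem_Icc] at hb; show n - (n - b) = b; omega
    · intro a ha; simp only [Finset.mem_Icc] at ha; show n - (n - a) = a; omega
    · intro b hb
      simp only [Finset.mem_Icc] at hb
      congr 1
      have hbn : b ≤ n := by omega
      have hcast : ((n - (n - b) : ℕ) : ZMod n) = (b : ZMod n) := by congr 1; omega
      have : (((n - b : ℕ)) : ZMod n) = - (b : ZMod n) := by
        rw [Nat.cast_sub hbn, ZMod.natCast_self, zero_sub]
      rw [this]
      ring
  rw [hre, ← Finset.sum_add_distrib]
  rw [Complex.ofReal_sum]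
  apply Finset.sum_congr rfl
  intro a ha
  simp only [Finset.mem_Icc] at ha
  exact ec_pair n j a (by omega)
open Polynomial

lemma ec_k_eq_neg_one (n k : ℕ) [NeZero n] (hn : n = 2 * k) (hk0 : 0 < k) :
    ec n (k : ZMod n) = -1 := by
  have hkn : k < n := by omega
  rw [ec, ZMod.val_cast_of_lt hkn, zc_exp_eq]
  have harg : (2 * Real.pi * k / n : ℝ) = Real.pi := by
    rw [hn]
    have : ((2 * k : ℕ) : ℝ) = 2 * (k : ℝ) := by push_cast; ring
    rw [this]
    have hk : (k : ℝ) ≠ 0 := Nat.cast_ne_zero.mpr (by omega)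
    field_simp
  rw [harg, Complex.exp_pi_mul_I]

lemma lam_S2 (n k s : ℕ) [NeZero n] (hn : n = 2 * k) (hk0 : 0 < k) (hsk : s < k)
    (S2 : Finset (ZMod n))
    (hS2 : S2 = ((Finset.Icc (k - s) (k - 1)).image fun h : ℕ => (h : ZMod n)) ∪
                ((Finset.Icc (k + 1) (k + s)).image fun h : ℕ => (h : ZMod n)))
    (j : ZMod n) :
    lamS n S2 j
      = (((-1 : ℝ) ^ j.val * ∑ a ∈ Finset.Icc 1 s, 2 * ((ec n j ^ a).re) : ℝ) : ℂ) := by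
  have hinj1 : ∀ a ∈ Finset.Icc (k-s) (k-1), ∀ b ∈ Finset.Icc (k-s) (k-1),
      (a : ZMod n) = (b : ZMod n) → a = b := by
    intro a ha b hb hab
    simp only [Finset.mem_Icc] at ha hb
    have : ((a : ZMod n)).val = ((b : ZMod n)).val := by rw [hab]
    rwa [ZMod.val_cast_of_lt (by omega), ZMod.val_cast_of_lt (by omega)] at this
  have hinj2 : ∀ a ∈ Finset.Icc (k+1) (k+s), ∀ b ∈ Finset.Icc (k+1) (k+s),
      (a : ZMod n) = (b : ZMod n) → a = b := by
    intro a ha b hb hab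
    simp only [Finset.mem_Icc] at ha hb
    have : ((a : ZMod n)).val = ((b : ZMod n)).val := by rw [hab]
    rwa [ZMod.val_cast_of_lt (by omega), ZMod.val_cast_of_lt (by omega)] at this
  have hdisj : Disjoint ((Finset.Icc (k-s) (k-1)).image fun h : ℕ => (h : ZMod n))
      ((Finset.Icc (k+1) (k+s)).image fun h : ℕ => (h : ZMod n)) := by
    rw [Finset.disjoint_left]
    intro x hx1 hx2
    rcases Finset.mem_image.mp hx1 with ⟨a, ha, rfl⟩
    rcases Finset.mem_image.mp hx2 with ⟨b, hb, hba⟩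
    simp only [Finset.mem_Icc] at ha hb
    have : ((b : ZMod n)).val = ((a : ZMod n)).val := by rw [hba]
    rw [ZMod.val_cast_of_lt (by omega), ZMod.val_cast_of_lt (by omega)] at this
    omega
  rw [lamS, hS2, Finset.sum_union hdisj, Finset.sum_image hinj1, Finset.sum_image hinj2]
  have hre1 : ∑ b ∈ Finset.Icc (k-s) (k-1), ec n ((b : ZMod n) * j)
      = ∑ a ∈ Finset.Icc 1 s, ec n ((k : ZMod n) * j) * ec n (-((a : ZMod n) * j)) := by
    refine Finset.sum_nbij' (fun b => k - b) (fun a => k - a) ?_ ?_ ?_ ?_ ?_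
    · intro b hb; simp only [Finset.mem_Icc] at *; omega
    · intro a ha; simp only [Finset.mem_Icc] at *; omega
    · intro b hb; simp only [Finset.mem_Icc] at hb; show k - (k - b) = b; omega
    · intro a ha; simp only [Finset.mem_Icc] at ha; show k - (k - a) = a; omega
    · intro b hb
      simp only [Finset.mem_Icc] at hb
      show ec n ((b : ZMod n) * j) = ec n ((k : ZMod n) * j) * ec n (-(((k - b : ℕ) : ZMod n) * j))
      rw [← ec_add]
      congr 1
      rw [Nat.cast_sub (by omega : b ≤ k)]
      ring
  have hre2 : ∑ b ∈ Finset.Icc (k+1) (k+s), ec n ((b : ZMod n) * j)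
      = ∑ a ∈ Finset.Icc 1 s, ec n ((k : ZMod n) * j) * ec n ((a : ZMod n) * j) := by
    refine Finset.sum_nbij' (fun b => b - k) (fun a => k + a) ?_ ?_ ?_ ?_ ?_
    · intro b hb; simp only [Finset.mem_Icc] at *; omega
    · intro a ha; simp only [Finset.mem_Icc] at *; omega
    · intro b hb; simp only [Finset.mem_Icc] at hb; show k + (b - k) = b; omega
    · intro a ha; simp only [Finset.mem_Icc] at ha; show k + a - k = a; omega
    · intro b hb
      simp only [Finset.mem_Icc] at hb
      show ec n ((b : ZMod n) * j) = ec n ((k : ZMod n) * j) * ec n (((b - k : ℕ) : ZMod n) * j)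
      rw [← ec_add]
      congr 1
      rw [Nat.cast_sub (by omega : k ≤ b)]
      ring
  rw [hre1, hre2, ← Finset.sum_add_distrib]
  have hterm : ∀ a ∈ Finset.Icc 1 s,
      ec n ((k : ZMod n) * j) * ec n (-((a : ZMod n) * j))
        + ec n ((k : ZMod n) * j) * ec n ((a : ZMod n) * j)
      = ec n ((k : ZMod n) * j) * ((2 * (ec n j ^ a).re : ℝ) : ℂ) := by
    intro a ha
    simp only [Finset.mem_Icc] at ha
    rw [← mul_add, add_comm (ec n (-((a : ZMod n) * j))), ec_pair n j a (by omega)]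
  have hk : ec n ((k : ZMod n) * j) = (((-1 : ℝ) ^ j.val : ℝ) : ℂ) := by
    rw [ec_mul, ec_k_eq_neg_one n k hn hk0]
    push_cast
    ring
  rw [Finset.sum_congr rfl hterm, hk]
  push_cast
  rw [Finset.mul_sum]
open Polynomial

lemma rr_sign (n k s : ℕ) [NeZero n] (hn : n = 2 * k) (hks : k = 2 * s + 1) (j : ZMod n)
    (ht : j.val % 2 = 1) :
    (j.val % 4 = 1 → j.val ≠ k → 0 < ∑ a ∈ Finset.Icc 1 s, 2 * ((ec n j ^ a).re)) ∧
    (j.val = k → k % 4 = 1 → (∑ a ∈ Finset.Icc 1 s, 2 * ((ec n j ^ a).re)) = 0) ∧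
    (j.val % 4 = 3 → (∑ a ∈ Finset.Icc 1 s, 2 * ((ec n j ^ a).re)) < 0) := by
  set t := j.val with htdef
  have htn : t < n := ZMod.val_lt j
  have ht1 : 1 ≤ t := by omega
  have hk0 : 0 < k := by omega
  have hpi := Real.pi_pos
  set x : ℝ := Real.pi * t / n with hxdef
  have hnR : (0 : ℝ) < n := by exact_mod_cast Nat.pos_of_ne_zero (NeZero.ne n)
  have htR0 : (0 : ℝ) < (t : ℝ) := by exact_mod_cast (by omega : 0 < t)
  have hx0 : 0 < x := by
    apply div_pos _ hnR
    exact mul_pos hpi htR0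
  have hxpi : x < Real.pi := by
    rw [hxdef, div_lt_iff₀ hnR]
    have : (t : ℝ) < (n : ℝ) := by exact_mod_cast htn
    nlinarith
  have hsin0 : 0 < Real.sin x := Real.sin_pos_of_pos_of_lt_pi hx0 hxpi
  set R : ℝ := ∑ a ∈ Finset.Icc 1 s, 2 * ((ec n j ^ a).re) with hRdef
  have hRcos : R = ∑ a ∈ Finset.Icc 1 s, 2 * Real.cos (2 * a * x) := by
    apply Finset.sum_congr rfl
    intro a _
    rw [ec_re_cos]
  have hmain : Real.sin x * R = (-1 : ℝ) ^ (t / 2) - Real.sin x := by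
    rw [hRcos, dirichlet]
    congr 1
    have harg : (2 * (s : ℝ) + 1) * x = (2 * ((t / 2 : ℕ) : ℝ) + 1) * Real.pi / 2 := by
      rw [hxdef, hn]
      have hkR : ((2 * k : ℕ) : ℝ) = 2 * (k : ℝ) := by push_cast; ring
      rw [hkR]
      have hkR2 : (k : ℝ) = 2 * (s : ℝ) + 1 := by exact_mod_cast congrArg (Nat.cast : ℕ → ℝ) hks
      have htR : (t : ℝ) = 2 * ((t / 2 : ℕ) : ℝ) + 1 := by
        have : t = 2 * (t / 2) + 1 := by omega
        exact_mod_cast congrArg (Nat.cast : ℕ → ℝ) this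
      have hkne : (k : ℝ) ≠ 0 := by positivity
      field_simp
      rw [htR]
      ring_nf
      rw [hkR2]
      ring
    rw [harg, sin_odd_half]
  have hxhalf : t = k → x = Real.pi / 2 := by
    intro htk
    rw [hxdef, htk, hn]
    have : ((2 * k : ℕ) : ℝ) = 2 * (k : ℝ) := by push_cast; ring
    rw [this]
    have hkne : (k : ℝ) ≠ 0 := by positivity
    field_simp
  have hxne : t ≠ k → Real.sin x < 1 := by
    intro htk
    apply sin_lt_one_of_ne x hx0 hxpi
    intro heq
    apply htk
    have : Real.pi * t / n = Real.pi / 2 := heq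
    rw [hn] at this
    have h2k : ((2 * k : ℕ) : ℝ) = 2 * (k : ℝ) := by push_cast; ring
    rw [h2k] at this
    have hkne : (k : ℝ) ≠ 0 := by positivity
    have hpne : Real.pi ≠ 0 := ne_of_gt hpi
    have : (t : ℝ) = (k : ℝ) := by
      field_simp at this
      nlinarith [this]
    exact_mod_cast this
  refine ⟨?_, ?_, ?_⟩
  · intro h4 hne
    have hm : (t / 2) % 2 = 0 := by omega
    have hpow : (-1 : ℝ) ^ (t / 2) = 1 := Even.neg_one_pow (Nat.even_iff.mpr hm)
    rw [hpow] at hmain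
    have hlt := hxne hne
    nlinarith
  · intro htk hk4
    have hpow : (-1 : ℝ) ^ (t / 2) = 1 := by
      have : (t / 2) % 2 = 0 := by omega
      exact Even.neg_one_pow (Nat.even_iff.mpr this)
    rw [hpow] at hmain
    have : Real.sin x = 1 := by rw [hxhalf htk, Real.sin_pi_div_two]
    rw [this] at hmain
    nlinarith
  · intro h4
    have hpow : (-1 : ℝ) ^ (t / 2) = -1 := Odd.neg_one_pow (Nat.odd_iff.mpr (by omega))
    rw [hpow] at hmain
    have hle := Real.sin_le_one x
    nlinarith
open Polynomial

lemma cnt14 (q : ℕ) :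
    ((Finset.range (4*q+2)).filter (fun t => t % 4 = 1)).card = q + 1 ∧
    ((Finset.range (4*q+2)).filter (fun t => t % 4 = 3)).card = q := by
  induction q with
  | zero => decide
  | succ p ih =>
    have h : 4*(p+1)+2 = ((((4*p+2)+1)+1)+1)+1 := by ring
    rw [h, Finset.range_add_one, Finset.range_add_one, Finset.range_add_one, Finset.range_add_one]
    have hnm : ∀ m : ℕ, 4*p+2 ≤ m → ∀ P : ℕ → Prop, ∀ inst : DecidablePred P,
        m ∉ (Finset.range (4*p+2)).filter P := by
      intro m hm P _ hmem
      simp only [Finset.mem_filter, Finset.mem_range] at hmem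
      omega
    constructor
    · rw [Finset.filter_insert, if_pos (by omega), Finset.filter_insert, if_neg (by omega),
        Finset.filter_insert, if_neg (by omega), Finset.filter_insert, if_neg (by omega)]
      rw [Finset.card_insert_of_notMem (hnm _ (by omega) _ _), ih.1]
    · rw [Finset.filter_insert, if_neg (by omega), Finset.filter_insert, if_neg (by omega),
        Finset.filter_insert, if_pos (by omega), Finset.filter_insert, if_neg (by omega)]
      rw [Finset.card_insert_of_notMem (hnm _ (by omega) _ _), ih.2]

lemma card_zmod_filter (n : ℕ) [NeZero n] (P : ℕ → Prop) [DecidablePred P] :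
    (Finset.univ.filter (fun j : ZMod n => P j.val)).card
      = ((Finset.range n).filter P).card := by
  apply Finset.card_nbij (fun j => j.val)
  · intro a ha
    simp only [Finset.mem_coe, Finset.mem_filter, Finset.mem_range, Finset.mem_univ, true_and] at *
    exact ⟨ZMod.val_lt a, ha⟩
  · intro a _ b _ hab
    exact ZMod.val_injective n hab
  · intro t ht
    simp only [Finset.coe_filter, Finset.mem_range, Set.mem_setOf_eq, Set.mem_image] at *
    refine ⟨(t : ZMod n), ⟨Finset.mem_univ _, ?_⟩, ?_⟩ <;>
      rw [ZMod.val_cast_of_lt ht.1]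
    · exact ht.2
open Polynomial

noncomputable def rrF (n s : ℕ) [NeZero n] (j : ZMod n) : ℝ :=
  ∑ a ∈ Finset.Icc 1 s, 2 * ((ec n j ^ a).re)

noncomputable def rr2F (n s : ℕ) [NeZero n] (j : ZMod n) : ℝ :=
  (-1 : ℝ) ^ (j.val) * rrF n s j

lemma mcard_filter_map (n : ℕ) [NeZero n] (f : ZMod n → ℝ) (p : ℝ → Prop) [DecidablePred p] :
    Multiset.card (Multiset.filter p (Finset.univ.val.map f))
      = (Finset.univ.filter (fun j => p (f j))).card := by
  rw [Multiset.filter_map, Multiset.card_map, Finset.card, Finset.filter_val]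
  congr 1

theorem stmt9 (α k s n : ℕ) [NeZero n] (hk : k = 4 * α + 9) (hs : s = 2 * α + 4)
    (hn : n = 2 * k)
    (S1 S2 : Finset (ZMod n))
    (hS1 : S1 = ((Finset.Icc 1 s).image fun h : ℕ => (h : ZMod n)) ∪
                ((Finset.Icc (n - s) (n - 1)).image fun h : ℕ => (h : ZMod n)))
    (hS2 : S2 = ((Finset.Icc (k - s) (k - 1)).image fun h : ℕ => (h : ZMod n)) ∪
                ((Finset.Icc (k + 1) (k + s)).image fun h : ℕ => (h : ZMod n))) :
    Multiset.card ((circSpectrum n S1).filter (fun x => 0 < x)) =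
        Multiset.card ((circSpectrum n S2).filter (fun x => 0 < x)) ∧
      Multiset.card ((circSpectrum n S1).filter (fun x => x < 0)) =
        Multiset.card ((circSpectrum n S2).filter (fun x => x < 0)) ∧
      Multiset.card ((circSpectrum n S1).filter (fun x => x = 0)) =
        Multiset.card ((circSpectrum n S2).filter (fun x => x = 0)) := by
  have hk0 : 0 < k := by omega
  have h2s : 2 * s < n := by omega
  have hsk : s < k := by omega
  have hks : k = 2 * s + 1 := by omega
  have hk4 : k % 4 = 1 := by omega
  have hkn : k < n := by omega
  have hn4 : n = 4 * s + 2 := by omega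
  have hspec1 : circSpectrum n S1 = Finset.univ.val.map (rrF n s) :=
    spectrum_eq n S1 (rrF n s) (fun j => lam_S1 n s h2s S1 hS1 j)
  have hspec2 : circSpectrum n S2 = Finset.univ.val.map (rr2F n s) :=
    spectrum_eq n S2 (rr2F n s) (fun j => lam_S2 n k s hn hk0 hsk S2 hS2 j)
  have hsign : ∀ j : ZMod n, j.val % 2 = 1 →
      (j.val % 4 = 1 → j.val ≠ k → 0 < rrF n s j) ∧
      (j.val = k → k % 4 = 1 → rrF n s j = 0) ∧
      (j.val % 4 = 3 → rrF n s j < 0) :=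
    fun j hj => rr_sign n k s hn hks j hj
  have hchar_pos : ∀ j : ZMod n, (0 < rrF n s j ∧ j.val % 2 = 1) ↔ (j.val % 4 = 1 ∧ j.val ≠ k) := by
    intro j
    constructor
    · rintro ⟨hpos, hodd⟩
      obtain ⟨c1, c2, c3⟩ := hsign j hodd
      have h4 : j.val % 4 = 1 ∨ j.val % 4 = 3 := by omega
      rcases h4 with h4 | h4
      · refine ⟨h4, fun hek => ?_⟩
        rw [c2 hek hk4] at hpos
        exact lt_irrefl 0 hpos
      · exact absurd hpos (not_lt.mpr (le_of_lt (c3 h4)))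
    · rintro ⟨h4, hne⟩
      have hodd : j.val % 2 = 1 := by omega
      exact ⟨(hsign j hodd).1 h4 hne, hodd⟩
  have hchar_neg : ∀ j : ZMod n, (rrF n s j < 0 ∧ j.val % 2 = 1) ↔ (j.val % 4 = 3) := by
    intro j
    constructor
    · rintro ⟨hneg, hodd⟩
      obtain ⟨c1, c2, c3⟩ := hsign j hodd
      have h4 : j.val % 4 = 1 ∨ j.val % 4 = 3 := by omega
      rcases h4 with h4 | h4
      · by_cases hek : j.val = k
        · rw [c2 hek hk4] at hneg
          exact absurd hneg (lt_irrefl 0)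
        · exact absurd (c1 h4 hek) (not_lt.mpr (le_of_lt hneg))
      · exact h4
    · intro h4
      have hodd : j.val % 2 = 1 := by omega
      exact ⟨(hsign j hodd).2.2 h4, hodd⟩
  -- counting
  have hcnt := cnt14 s
  have hcount1 : ((Finset.range n).filter (fun t => t % 4 = 1 ∧ t ≠ k)).card = s := by
    have he : (Finset.range n).filter (fun t => t % 4 = 1 ∧ t ≠ k)
        = ((Finset.range n).filter (fun t => t % 4 = 1)).erase k := by
      ext t
      simp only [Finset.mem_filter, Finset.mem_erase, Finset.mem_range]
      tauto
    have hmem : k ∈ (Finset.range n).filter (fun t => t % 4 = 1) :=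
      Finset.mem_filter.mpr ⟨Finset.mem_range.mpr hkn, hk4⟩
    rw [he, Finset.card_erase_of_mem hmem]
    have : ((Finset.range n).filter (fun t => t % 4 = 1)).card = s + 1 := by
      rw [hn4]; exact hcnt.1
    omega
  have hcount3 : ((Finset.range n).filter (fun t => t % 4 = 3)).card = s := by
    rw [hn4]; exact hcnt.2
  have hz1 : (Finset.univ.filter (fun j : ZMod n => j.val % 4 = 1 ∧ j.val ≠ k)).card = s := by
    rw [card_zmod_filter n (fun t => t % 4 = 1 ∧ t ≠ k)]; exact hcount1
  have hz3 : (Finset.univ.filter (fun j : ZMod n => j.val % 4 = 3)).card = s := by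
    rw [card_zmod_filter n (fun t => t % 4 = 3)]; exact hcount3
  have hodd_pos : (Finset.univ.filter (fun j : ZMod n => 0 < rrF n s j ∧ j.val % 2 = 1)).card = s := by
    rw [Finset.filter_congr (fun j _ => hchar_pos j)]; exact hz1
  have hodd_neg : (Finset.univ.filter (fun j : ZMod n => rrF n s j < 0 ∧ j.val % 2 = 1)).card = s := by
    rw [Finset.filter_congr (fun j _ => hchar_neg j)]; exact hz3
  have hflip : ∀ j : ZMod n, j.val % 2 = 1 → rr2F n s j = - rrF n s j := by
    intro j hj
    rw [rr2F, Odd.neg_one_pow (Nat.odd_iff.mpr hj), neg_one_mul]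
  have heven : ∀ j : ZMod n, ¬(j.val % 2 = 1) → rr2F n s j = rrF n s j := by
    intro j hj
    rw [rr2F, Even.neg_one_pow (Nat.even_iff.mpr (by omega)), one_mul]
  have hodd_pos2 : (Finset.univ.filter (fun j : ZMod n => 0 < rr2F n s j ∧ j.val % 2 = 1)).card = s := by
    have hiff : ∀ j : ZMod n, (0 < rr2F n s j ∧ j.val % 2 = 1) ↔ (rrF n s j < 0 ∧ j.val % 2 = 1) := by
      intro j
      constructor
      · rintro ⟨h, ho⟩
        rw [hflip j ho] at h
        exact ⟨by linarith, ho⟩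
      · rintro ⟨h, ho⟩
        rw [hflip j ho]
        exact ⟨by linarith, ho⟩
    rw [Finset.filter_congr (fun j _ => hiff j)]; exact hodd_neg
  have hodd_neg2 : (Finset.univ.filter (fun j : ZMod n => rr2F n s j < 0 ∧ j.val % 2 = 1)).card = s := by
    have hiff : ∀ j : ZMod n, (rr2F n s j < 0 ∧ j.val % 2 = 1) ↔ (0 < rrF n s j ∧ j.val % 2 = 1) := by
      intro j
      constructor
      · rintro ⟨h, ho⟩
        rw [hflip j ho] at h
        exact ⟨by linarith, ho⟩
      · rintro ⟨h, ho⟩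
        rw [hflip j ho]
        exact ⟨by linarith, ho⟩
    rw [Finset.filter_congr (fun j _ => hiff j)]; exact hodd_pos
  have heven_eq : ∀ (g : ℝ → Prop) (inst : DecidablePred g),
      Finset.univ.filter (fun j : ZMod n => g (rr2F n s j) ∧ ¬(j.val % 2 = 1))
        = Finset.univ.filter (fun j : ZMod n => g (rrF n s j) ∧ ¬(j.val % 2 = 1)) := by
    intro g inst
    apply Finset.filter_congr
    intro j _
    constructor
    · rintro ⟨h, ho⟩; rw [heven j ho] at h; exact ⟨h, ho⟩
    · rintro ⟨h, ho⟩; rw [heven j ho]; exact ⟨h, ho⟩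
  have hsplit : ∀ (f : ZMod n → ℝ) (g : ℝ → Prop) (inst : DecidablePred g),
      (Finset.univ.filter (fun j : ZMod n => g (f j))).card
        = (Finset.univ.filter (fun j : ZMod n => g (f j) ∧ j.val % 2 = 1)).card
          + (Finset.univ.filter (fun j : ZMod n => g (f j) ∧ ¬(j.val % 2 = 1))).card := by
    intro f g inst
    rw [← Finset.filter_filter, ← Finset.filter_filter]
    exact (Finset.card_filter_add_card_filter_not
      (s := Finset.univ.filter (fun j : ZMod n => g (f j))) (fun j => j.val % 2 = 1)).symm
  have main : ∀ (g : ℝ → Prop) (inst : DecidablePred g),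
      (Finset.univ.filter (fun j : ZMod n => g (rrF n s j) ∧ j.val % 2 = 1)).card
        = (Finset.univ.filter (fun j : ZMod n => g (rr2F n s j) ∧ j.val % 2 = 1)).card →
      (Finset.univ.filter (fun j : ZMod n => g (rrF n s j))).card
        = (Finset.univ.filter (fun j : ZMod n => g (rr2F n s j))).card := by
    intro g inst hoddeq
    rw [hsplit (rrF n s) g inst, hsplit (rr2F n s) g inst, hoddeq, heven_eq g inst]
  refine ⟨?_, ?_, ?_⟩
  · rw [hspec1, hspec2, mcard_filter_map n (rrF n s) (fun x => 0 < x),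
      mcard_filter_map n (rr2F n s) (fun x => 0 < x)]
    exact main (fun x => 0 < x) inferInstance (hodd_pos.trans hodd_pos2.symm)
  · rw [hspec1, hspec2, mcard_filter_map n (rrF n s) (fun x => x < 0),
      mcard_filter_map n (rr2F n s) (fun x => x < 0)]
    exact main (fun x => x < 0) inferInstance (hodd_neg.trans hodd_neg2.symm)
  · rw [hspec1, hspec2, mcard_filter_map n (rrF n s) (fun x => x = 0),
      mcard_filter_map n (rr2F n s) (fun x => x = 0)]
    congr 1
    apply Finset.filter_congr
    intro j _
    have hpow : ((-1 : ℝ) ^ j.val) ≠ 0 := pow_ne_zero _ (by norm_num)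
    simp only [rr2F, mul_eq_zero]
    tauto
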